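/- The sequence m ↦ (−1)^m · I_{2m} / (√2 · (2m/e)^m) tends to 1 as m → ∞ (limit along the filter atTop on ℕ). -/

import Mathlib

open MeasureTheory Real

/-- Physicists' Hermite polynomials: `H 0 x = 1`, `H 1 x = 2x`,
`H (n+1) x = 2x * H n x - 2n * H (n-1) x`. -/
noncomputable def hermiteP : ℕ → ℝ → ℝ
  | 0, _ => 1
  | 1, x => 2 * x
  | n + 2, x => 2 * x * hermiteP (n + 1) x - 2 * ((n : ℝ) + 1) * hermiteP n x

/-- `I n = √(2/π) ∫ H_n(x) e^{-2x²} dx`. -/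
noncomputable def I (n : ℕ) : ℝ :=
  Real.sqrt (2 / π) * ∫ x : ℝ, hermiteP n x * Real.exp (-2 * x ^ 2)

open Filter Polynomial Asymptotics

lemma hermiteP_zero (x : ℝ) : hermiteP 0 x = 1 := rfl
lemma hermiteP_one (x : ℝ) : hermiteP 1 x = 2 * x := rfl
lemma hermiteP_add_two (n : ℕ) (x : ℝ) :
    hermiteP (n + 2) x = 2 * x * hermiteP (n + 1) x - 2 * ((n : ℝ) + 1) * hermiteP n x := rfl

/-- Derivative of `hermiteP n`. -/
noncomputable def hermD : ℕ → ℝ → ℝ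
  | 0, _ => 0
  | n + 1, x => 2 * ((n : ℝ) + 1) * hermiteP n x

lemma hermD_zero (x : ℝ) : hermD 0 x = 0 := rfl
lemma hermD_succ (n : ℕ) (x : ℝ) : hermD (n + 1) x = 2 * ((n : ℝ) + 1) * hermiteP n x := rfl

lemma herm_succ : ∀ (n : ℕ) (x : ℝ), hermiteP (n + 1) x = 2 * x * hermiteP n x - hermD n x
  | 0, x => by rw [hermiteP_one, hermiteP_zero, hermD_zero]; ring
  | n + 1, x => by rw [hermiteP_add_two, hermD_succ]

lemma hasDerivAt_herm : ∀ (n : ℕ) (x : ℝ), HasDerivAt (fun y => hermiteP n y) (hermD n x) x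
  | 0, x => by
      have : (fun y => hermiteP 0 y) = fun _ => (1 : ℝ) := funext fun y => hermiteP_zero y
      rw [this, hermD_zero]; exact hasDerivAt_const x 1
  | 1, x => by
      have : (fun y => hermiteP 1 y) = fun y => 2 * y := funext fun y => hermiteP_one y
      rw [this, hermD_succ]
      simpa [hermiteP_zero] using (hasDerivAt_id x).const_mul (2 : ℝ)
  | n + 2, x => by
      have h1 := hasDerivAt_herm (n + 1) x
      have h2 := hasDerivAt_herm n x
      have key : HasDerivAt (fun y => 2 * y * hermiteP (n + 1) y - 2 * ((n : ℝ) + 1) * hermiteP n y)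
          ((2 * 1) * hermiteP (n + 1) x + (2 * x) * hermD (n + 1) x
            - 2 * ((n : ℝ) + 1) * hermD n x) x := by
        exact ((((hasDerivAt_id x).const_mul (2:ℝ)).mul h1).sub (h2.const_mul _))
      have heq : (2 * 1) * hermiteP (n + 1) x + (2 * x) * hermD (n + 1) x
            - 2 * ((n : ℝ) + 1) * hermD n x = hermD (n + 2) x := by
        have hs := herm_succ n x
        rw [hermD_succ, hermD_succ]
        push_cast
        linear_combination (-2 * ((n : ℝ) + 1)) * hs
      have hfun : (fun y => hermiteP (n + 2) y)
          = fun y => 2 * y * hermiteP (n + 1) y - 2 * ((n : ℝ) + 1) * hermiteP n y :=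
        funext fun y => hermiteP_add_two n y
      rw [hfun, ← heq]
      exact key

lemma continuous_herm (n : ℕ) : Continuous (fun x => hermiteP n x) :=
  continuous_iff_continuousAt.2 fun x => (hasDerivAt_herm n x).continuousAt

/-- Polynomial representation. -/
noncomputable def hPoly : ℕ → Polynomial ℝ
  | 0 => 1
  | 1 => Polynomial.C 2 * Polynomial.X
  | n + 2 => Polynomial.C 2 * Polynomial.X * hPoly (n + 1)
      - Polynomial.C (2 * ((n : ℝ) + 1)) * hPoly n

lemma hPoly_eval : ∀ (n : ℕ) (x : ℝ), (hPoly n).eval x = hermiteP n x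
  | 0, x => by simp [hPoly, hermiteP_zero]
  | 1, x => by simp [hPoly, hermiteP_one]
  | n + 2, x => by
      have e1 := hPoly_eval (n + 1) x
      have e2 := hPoly_eval n x
      simp only [hPoly, Polynomial.eval_sub, Polynomial.eval_mul, Polynomial.eval_C,
        Polynomial.eval_X, e1, e2, hermiteP_add_two]

lemma integrable_pow_gauss (n : ℕ) :
    Integrable fun x : ℝ => x ^ n * Real.exp (-2 * x ^ 2) := by
  have hmeas : AEStronglyMeasurable (fun x : ℝ => x ^ n * Real.exp (-2 * x ^ 2)) volume := by
    exact ((continuous_pow n).mul (by fun_prop)).aestronglyMeasurable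
  have hg : Integrable fun x : ℝ => (1 + (n.factorial : ℝ)) * Real.exp (-1 * x ^ 2) :=
    (integrable_exp_neg_mul_sq one_pos).const_mul _
  refine hg.mono' hmeas (Filter.Eventually.of_forall fun x => ?_)
  have hx2 : Real.exp (-2 * x ^ 2) = Real.exp (-1 * x ^ 2) * Real.exp (-1 * x ^ 2) := by
    rw [← Real.exp_add]; ring_nf
  have h1 : |x| ^ n * Real.exp (-1 * x ^ 2) ≤ 1 + (n.factorial : ℝ) := by
    rcases le_total (|x|) 1 with h | h
    · have : |x| ^ n ≤ 1 := pow_le_one₀ (abs_nonneg x) h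
      nlinarith [Real.exp_le_one_iff.2 (by nlinarith [sq_nonneg x] : -1 * x ^ 2 ≤ 0),
        Real.exp_pos (-1 * x ^ 2), (Nat.cast_pos (α := ℝ)).2 n.factorial_pos]
    · have h1 : |x| ^ n ≤ (x ^ 2) ^ n := by
        rw [← sq_abs]
        exact pow_le_pow_left₀ (abs_nonneg x) (by nlinarith) n
      have h2 : (x ^ 2) ^ n ≤ (n.factorial : ℝ) * Real.exp (x ^ 2) := by
        have := Real.pow_div_factorial_le_exp (x ^ 2) (sq_nonneg x) n
        rw [div_le_iff₀ (by positivity)] at this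
        linarith [this]
      have h3 : (x ^ 2) ^ n * Real.exp (-1 * x ^ 2) ≤ (n.factorial : ℝ) := by
        rw [show (-1 : ℝ) * x ^ 2 = -(x ^ 2) by ring, Real.exp_neg, ← Real.exp_neg]
        calc (x ^ 2) ^ n * Real.exp (-x ^ 2) ≤ ((n.factorial : ℝ) * Real.exp (x ^ 2)) * Real.exp (-x^2) :=
              mul_le_mul_of_nonneg_right h2 (Real.exp_pos _).le
          _ = (n.factorial : ℝ) := by rw [mul_assoc, ← Real.exp_add]; simp
      have := mul_le_mul_of_nonneg_right h1 (Real.exp_pos (-1 * x ^ 2)).le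
      linarith
  calc ‖x ^ n * Real.exp (-2 * x ^ 2)‖ = |x| ^ n * Real.exp (-1 * x ^ 2) * Real.exp (-1 * x^2) := by
        rw [norm_mul, norm_pow, Real.norm_eq_abs, Real.norm_eq_abs,
          abs_of_pos (Real.exp_pos _), hx2, mul_assoc]
    _ ≤ (1 + (n.factorial : ℝ)) * Real.exp (-1 * x ^ 2) :=
        mul_le_mul_of_nonneg_right h1 (Real.exp_pos _).le

lemma integrable_poly_gauss (p : Polynomial ℝ) :
    Integrable fun x : ℝ => p.eval x * Real.exp (-2 * x ^ 2) := by
  induction p using Polynomial.induction_on' with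
  | add p q hp hq => simpa [add_mul, Pi.add_def] using hp.add hq
  | monomial n a =>
      simpa [Polynomial.eval_monomial, mul_assoc] using (integrable_pow_gauss n).const_mul a

lemma integrable_herm_gauss (n : ℕ) :
    Integrable fun x : ℝ => hermiteP n x * Real.exp (-2 * x ^ 2) := by
  simpa only [hPoly_eval] using integrable_poly_gauss (hPoly n)

lemma tendsto_pow_gauss (n : ℕ) :
    Filter.Tendsto (fun x : ℝ => x ^ n * Real.exp (-2 * x ^ 2)) atTop (nhds 0) := by
  have h := rpow_mul_exp_neg_mul_sq_isLittleO_exp_neg (by norm_num : (0:ℝ) < 2) (n : ℝ)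
  have hlim : Filter.Tendsto (fun x : ℝ => Real.exp (-(1 / 2) * x)) atTop (nhds 0) :=
    Real.tendsto_exp_atBot.comp (tendsto_id.const_mul_atTop_of_neg (by norm_num))
  have := h.tendsto_zero_of_tendsto hlim
  refine this.congr' ?_
  filter_upwards [eventually_ge_atTop (0:ℝ)] with x hx
  rw [Real.rpow_natCast]

lemma tendsto_poly_gauss_top (p : Polynomial ℝ) :
    Filter.Tendsto (fun x : ℝ => p.eval x * Real.exp (-2 * x ^ 2)) atTop (nhds 0) := by
  have : ∀ x : ℝ, p.eval x * Real.exp (-2 * x ^ 2)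
      = ∑ i ∈ Finset.range (p.natDegree + 1), p.coeff i * (x ^ i * Real.exp (-2 * x ^ 2)) := by
    intro x
    rw [Polynomial.eval_eq_sum_range, Finset.sum_mul]
    congr 1; funext i; ring
  simp only [this]
  have := tendsto_finset_sum (Finset.range (p.natDegree + 1))
    (fun i _ => (tendsto_pow_gauss i).const_mul (p.coeff i))
  simpa using this

lemma tendsto_poly_gauss_bot (p : Polynomial ℝ) :
    Filter.Tendsto (fun x : ℝ => p.eval x * Real.exp (-2 * x ^ 2)) atBot (nhds 0) := by
  have h := (tendsto_poly_gauss_top (p.comp (-Polynomial.X))).comp tendsto_neg_atBot_atTop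
  refine h.congr fun x => ?_
  simp [Function.comp, Polynomial.eval_comp]

lemma tendsto_herm_gauss_top (n : ℕ) :
    Filter.Tendsto (fun x : ℝ => hermiteP n x * Real.exp (-2 * x ^ 2)) atTop (nhds 0) := by
  simpa only [hPoly_eval] using tendsto_poly_gauss_top (hPoly n)

lemma tendsto_herm_gauss_bot (n : ℕ) :
    Filter.Tendsto (fun x : ℝ => hermiteP n x * Real.exp (-2 * x ^ 2)) atBot (nhds 0) := by
  simpa only [hPoly_eval] using tendsto_poly_gauss_bot (hPoly n)

lemma J_rec (n : ℕ) :
    ∫ x : ℝ, hermiteP (n + 2) x * Real.exp (-2 * x ^ 2)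
      = -((n : ℝ) + 1) * ∫ x : ℝ, hermiteP n x * Real.exp (-2 * x ^ 2) := by
  set F : ℝ → ℝ := fun x => hermiteP (n + 1) x * Real.exp (-2 * x ^ 2) with hF
  set f' : ℝ → ℝ := fun x =>
    (-2) * (hermiteP (n + 2) x * Real.exp (-2 * x ^ 2))
      + (-2 * ((n : ℝ) + 1)) * (hermiteP n x * Real.exp (-2 * x ^ 2)) with hf'
  have hderiv : ∀ x : ℝ, HasDerivAt F (f' x) x := by
    intro x
    have hE : HasDerivAt (fun y : ℝ => Real.exp (-2 * y ^ 2))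
        (Real.exp (-2 * x ^ 2) * (-2 * (2 * x ^ 1))) x :=
      (((hasDerivAt_pow 2 x).const_mul (-2 : ℝ))).exp
    have := (hasDerivAt_herm (n + 1) x).mul hE
    refine this.congr_deriv ?_
    rw [hf']
    have e2 : hermiteP (n + 2) x
        = 2 * x * hermiteP (n + 1) x - 2 * ((n : ℝ) + 1) * hermiteP n x := hermiteP_add_two n x
    rw [hermD_succ]
    push_cast
    linear_combination (2 * Real.exp (-2 * x ^ 2)) * e2
  have hint : Integrable f' := by
    rw [hf']
    exact ((integrable_herm_gauss (n + 2)).const_mul (-2)).add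
      ((integrable_herm_gauss n).const_mul (-2 * ((n : ℝ) + 1)))
  have htop : ∫ x in Set.Ioi (0 : ℝ), f' x = 0 - F 0 :=
    MeasureTheory.integral_Ioi_of_hasDerivAt_of_tendsto' (fun x _ => hderiv x)
      hint.integrableOn (tendsto_herm_gauss_top (n + 1))
  have hbot : ∫ x in Set.Iic (0 : ℝ), f' x = F 0 - 0 :=
    MeasureTheory.integral_Iic_of_hasDerivAt_of_tendsto' (fun x _ => hderiv x)
      hint.integrableOn (tendsto_herm_gauss_bot (n + 1))
  have htot : (∫ x : ℝ, f' x) = 0 := by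
    rw [← intervalIntegral.integral_Iic_add_Ioi (b := (0 : ℝ)) hint.integrableOn hint.integrableOn, htop, hbot]
    ring
  have hsplit : (∫ x : ℝ, f' x)
      = (-2) * (∫ x : ℝ, hermiteP (n + 2) x * Real.exp (-2 * x ^ 2))
        + (-2 * ((n : ℝ) + 1)) * (∫ x : ℝ, hermiteP n x * Real.exp (-2 * x ^ 2)) := by
    rw [hf', integral_add ((integrable_herm_gauss (n + 2)).const_mul _)
      ((integrable_herm_gauss n).const_mul _), integral_const_mul, integral_const_mul]
  rw [hsplit] at htot
  linarith

lemma J_zero : (∫ x : ℝ, hermiteP 0 x * Real.exp (-2 * x ^ 2)) = Real.sqrt (π / 2) := by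
  simp only [hermiteP_zero, one_mul]
  simpa using integral_gaussian 2

lemma J_even (m : ℕ) :
    (∫ x : ℝ, hermiteP (2 * m) x * Real.exp (-2 * x ^ 2))
      = (-1) ^ m * (((2 * m).factorial : ℝ) / (2 ^ m * m.factorial)) * Real.sqrt (π / 2) := by
  induction m with
  | zero => simpa using J_zero
  | succ m ih =>
      have h2 : 2 * (m + 1) = (2 * m) + 2 := by ring
      rw [h2, J_rec (2 * m), ih]
      have hf1 : ((2 * m + 2).factorial : ℝ)
          = (2 * (m:ℝ) + 2) * ((2 * (m:ℝ) + 1) * ((2 * m).factorial : ℝ)) := by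
        rw [show 2 * m + 2 = (2 * m + 1) + 1 from rfl, Nat.factorial_succ, Nat.factorial_succ]
        push_cast; ring
      rw [hf1, Nat.factorial_succ]
      have hB : ((m.factorial : ℝ)) ≠ 0 := Nat.cast_ne_zero.2 m.factorial_pos.ne'
      have h2m : ((2:ℝ)) ^ m ≠ 0 := by positivity
      have hm1 : ((m:ℝ) + 1) ≠ 0 := by positivity
      push_cast
      field_simp
      ring

lemma I_even (m : ℕ) :
    I (2 * m) = (-1) ^ m * (((2 * m).factorial : ℝ) / (2 ^ m * m.factorial)) := by
  rw [I, J_even]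
  have hs : Real.sqrt (2 / π) * Real.sqrt (π / 2) = 1 := by
    rw [← Real.sqrt_mul (by positivity : (0:ℝ) ≤ 2 / π),
      show (2 / π) * (π / 2) = 1 by field_simp [Real.pi_ne_zero], Real.sqrt_one]
  linear_combination ((-1:ℝ) ^ m * (((2 * m).factorial : ℝ) / (2 ^ m * m.factorial))) * hs

lemma ratio_eq (m : ℕ) (hm : 1 ≤ m) :
    ((2 * m).factorial : ℝ) / (2 ^ m * m.factorial)
        / (Real.sqrt 2 * ((2 * m : ℝ) / Real.exp 1) ^ m)
      = Stirling.stirlingSeq (2 * m) / Stirling.stirlingSeq m := by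
  have hm0 : (0:ℝ) < m := by exact_mod_cast hm
  rw [Stirling.stirlingSeq, Stirling.stirlingSeq]
  push_cast
  rw [Real.sqrt_mul (by norm_num : (0:ℝ) ≤ 2) (2 * (m:ℝ)),
    show 2 * m = m * 2 from mul_comm 2 m, pow_mul,
    show (2 * (m:ℝ) / Real.exp 1) = 2 * ((m:ℝ) / Real.exp 1) from by ring, mul_pow]
  have hB : ((m.factorial : ℝ)) ≠ 0 := Nat.cast_ne_zero.2 m.factorial_pos.ne'
  have hA : (((m * 2).factorial : ℝ)) ≠ 0 := Nat.cast_ne_zero.2 (m * 2).factorial_pos.ne'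
  have h2m : ((2:ℝ)) ^ m ≠ 0 := by positivity
  have hsqrt2 : Real.sqrt 2 ≠ 0 := by positivity
  have hsqrtm : Real.sqrt (2 * (m:ℝ)) ≠ 0 := by positivity
  have hpow : ((m:ℝ) / Real.exp 1) ^ m ≠ 0 :=
    pow_ne_zero _ (div_ne_zero hm0.ne' (Real.exp_ne_zero 1))
  field_simp

theorem I_asymptotic :
    Filter.Tendsto
      (fun m : ℕ =>
        (-1 : ℝ) ^ m * I (2 * m) / (Real.sqrt 2 * ((2 * m : ℝ) / Real.exp 1) ^ m))
      Filter.atTop (nhds 1) := by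
  have hsp : Real.sqrt π ≠ 0 := by positivity
  have h2m : Filter.Tendsto (fun m : ℕ => 2 * m) Filter.atTop Filter.atTop :=
    Filter.tendsto_id.const_mul_atTop' two_pos
  have h1 : Filter.Tendsto
      (fun m : ℕ => Stirling.stirlingSeq (2 * m) / Stirling.stirlingSeq m)
      Filter.atTop (nhds 1) := by
    have := (Stirling.tendsto_stirlingSeq_sqrt_pi.comp h2m).div
      Stirling.tendsto_stirlingSeq_sqrt_pi hsp
    simpa [div_self hsp, Pi.div_def, Function.comp_def] using this
  refine h1.congr' ?_
  filter_upwards [Filter.eventually_ge_atTop 1] with m hm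
  rw [I_even]
  have hneg : (-1 : ℝ) ^ m * ((-1 : ℝ) ^ m
      * (((2 * m).factorial : ℝ) / (2 ^ m * m.factorial)))
        = ((2 * m).factorial : ℝ) / (2 ^ m * m.factorial) := by
    rw [← mul_assoc, ← mul_pow]; norm_num
  rw [hneg, ratio_eq m hm]
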